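/- Simplicity of the quotient module: the 𝒢-module (ℂ[t^{±1}] ⊕ ℂ[t^{±1}]‾)/ℂ with actions L_m·tⁿ = -n t^{m+n}, L_m·t̄ᵏ = -(k+m/2)t̄^{m+k}, H_m·t̄ᵏ = t̄^{m+k}, G⁺_m·tⁿ = -2n t̄^{m+n}, G⁻_m·t̄ᵏ = t^{m+k} (all other actions zero) has no proper nonzero submodule invariant under all the operators L_m, H_m, G^±_m. -/

import Mathlib

/-- The operator on `ℂ[t,t⁻¹]` sending the basis vector `tⁿ ↦ c n · t^{m+n}`. -/
noncomputable def wop (c : ℤ → ℂ) (m : ℤ) : (ℤ →₀ ℂ) →ₗ[ℂ] (ℤ →₀ ℂ) :=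
  Finsupp.lsum ℂ fun n => c n • Finsupp.lsingle (m + n)

/-- The space `ℂ[t,t⁻¹] ⊕ ℂ[t,t⁻¹]‾`. -/
abbrev VV : Type := (ℤ →₀ ℂ) × (ℤ →₀ ℂ)

/-- `L_m : tⁿ ↦ -n t^{m+n}`, `t̄ᵏ ↦ -(k + m/2) t̄^{m+k}`. -/
noncomputable def oL (m : ℤ) : VV →ₗ[ℂ] VV :=
  (wop (fun n => -(n : ℂ)) m).prodMap (wop (fun k => -((k : ℂ) + (m : ℂ) / 2)) m)

/-- `H_m : tⁿ ↦ 0`, `t̄ᵏ ↦ t̄^{m+k}`. -/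
noncomputable def oH (m : ℤ) : VV →ₗ[ℂ] VV :=
  (0 : (ℤ →₀ ℂ) →ₗ[ℂ] (ℤ →₀ ℂ)).prodMap (wop (fun _ => 1) m)

/-- `G⁺_m : tⁿ ↦ -2n t̄^{m+n}`, `t̄ᵏ ↦ 0`. -/
noncomputable def oGp (m : ℤ) : VV →ₗ[ℂ] VV :=
  LinearMap.prod 0 ((wop (fun n => -2 * (n : ℂ)) m).comp (LinearMap.fst ℂ _ _))

/-- `G⁻_m : t̄ᵏ ↦ t^{m+k}`, `tⁿ ↦ 0`. -/
noncomputable def oGm (m : ℤ) : VV →ₗ[ℂ] VV :=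
  LinearMap.prod ((wop (fun _ => 1) m).comp (LinearMap.snd ℂ _ _)) 0

/-- The line `ℂ·1` in the first summand. -/
noncomputable def Kone : Submodule ℂ VV :=
  Submodule.span ℂ {((Finsupp.single (0 : ℤ) (1 : ℂ)), (0 : ℤ →₀ ℂ))}

lemma wop_single (c : ℤ → ℂ) (m n : ℤ) (x : ℂ) :
    wop c m (Finsupp.single n x) = Finsupp.single (m + n) (c n * x) := by
  rw [wop, Finsupp.lsum_single, LinearMap.smul_apply, Finsupp.lsingle_apply,
    Finsupp.smul_single']

lemma wop_apply (c : ℤ → ℂ) (b : ℤ →₀ ℂ) (j : ℤ) : (wop c 0 b) j = c j * b j := by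
  rw [wop, Finsupp.lsum_apply, Finsupp.sum_apply, Finsupp.sum]
  have h1 : ∀ n ∈ b.support, ((c n • Finsupp.lsingle (0 + n) : ℂ →ₗ[ℂ] ℤ →₀ ℂ) (b n)) j
      = if n = j then c n * b n else 0 := by
    intro n _
    rw [LinearMap.smul_apply, Finsupp.lsingle_apply, Finsupp.smul_single', zero_add,
      Finsupp.single_apply]
  rw [Finset.sum_congr rfl h1, Finset.sum_ite_eq' b.support j fun n => c n * b n]
  by_cases h : j ∈ b.support
  · simp [h]
  · simp [h, Finsupp.notMem_support_iff.mp h]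

lemma wop_one_zero : wop (fun _ => (1 : ℂ)) 0 = LinearMap.id := by
  apply Finsupp.lhom_ext
  intro n x
  rw [wop_single, zero_add, one_mul, LinearMap.id_apply]

lemma extract (S : Submodule ℂ (ℤ →₀ ℂ))
    (hD : ∀ b ∈ S, wop (fun k => (k : ℂ)) 0 b ∈ S) :
    ∀ b ∈ S, ∀ k : ℤ, Finsupp.single k (b k) ∈ S := by
  suffices H : ∀ n : ℕ, ∀ b ∈ S, b.support.card = n → ∀ k, Finsupp.single k (b k) ∈ S by
    intro b hb k; exact H b.support.card b hb rfl k
  intro n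
  induction n using Nat.strong_induction_on with
  | _ n IH =>
    intro b hb hcard k
    by_cases hk : b k = 0
    · rw [hk, Finsupp.single_zero]; exact S.zero_mem
    have hks : k ∈ b.support := Finsupp.mem_support_iff.mpr hk
    set g : ℤ →₀ ℂ := wop (fun k => (k : ℂ)) 0 b - (k : ℂ) • b with hg
    have hgS : g ∈ S := S.sub_mem (hD b hb) (S.smul_mem _ hb)
    have hgapp : ∀ j, g j = ((j : ℂ) - k) * b j := by
      intro j
      rw [hg, Finsupp.sub_apply, Finsupp.smul_apply, wop_apply, smul_eq_mul, sub_mul]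
    have hgsupp : g.support ⊆ b.support.erase k := by
      intro j hj
      rw [Finsupp.mem_support_iff, hgapp] at hj
      rcases mul_ne_zero_iff.mp hj with ⟨h1, h2⟩
      refine Finset.mem_erase.mpr ⟨?_, Finsupp.mem_support_iff.mpr h2⟩
      intro hjk; apply h1; rw [hjk]; ring
    have hlt : g.support.card < n := by
      calc g.support.card ≤ (b.support.erase k).card := Finset.card_le_card hgsupp
        _ < b.support.card := Finset.card_erase_lt_of_mem hks
        _ = n := hcard
    have hcomp : ∀ j, j ≠ k → Finsupp.single j (b j) ∈ S := by
      intro j hjk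
      have h1 : Finsupp.single j (g j) ∈ S := IH _ hlt g hgS rfl j
      have h2 : ((j : ℂ) - k) ≠ 0 := by
        intro h; apply hjk
        have : (j : ℂ) = (k : ℂ) := by linear_combination h
        exact_mod_cast this
      have := S.smul_mem (((j : ℂ) - k)⁻¹) h1
      rwa [Finsupp.smul_single, hgapp, smul_eq_mul, inv_mul_cancel_left₀ h2] at this
    have hsum : Finsupp.single k (b k)
        = b - ∑ j ∈ b.support.erase k, Finsupp.single j (b j) := by
      have hb' : b = ∑ j ∈ b.support, Finsupp.single j (b j) := by
        conv_lhs => rw [← Finsupp.sum_single b]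
        rfl
      rw [eq_sub_iff_add_eq,
        Finset.add_sum_erase b.support (fun j => Finsupp.single j (b j)) hks, ← hb']
    rw [hsum]
    refine S.sub_mem hb (Submodule.sum_mem S ?_)
    intro j hj
    exact hcomp j (Finset.mem_erase.mp hj).1

/-- Simplicity of the quotient module: in the lattice of submodules of
`ℂ[t,t⁻¹] ⊕ ℂ[t,t⁻¹]‾`, any submodule containing `ℂ·1` and invariant under all the
operators `L_m, H_m, G^±_m` is either `ℂ·1` or everything; equivalently, the quotient
`𝒢`-module `(ℂ[t^{±1}] ⊕ ℂ[t^{±1}]‾)/ℂ` has no proper nonzero invariant subspace. -/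
theorem stmt16 (N : Submodule ℂ VV) (hK : Kone ≤ N)
    (hL : ∀ m : ℤ, ∀ v ∈ N, oL m v ∈ N)
    (hH : ∀ m : ℤ, ∀ v ∈ N, oH m v ∈ N)
    (hGp : ∀ m : ℤ, ∀ v ∈ N, oGp m v ∈ N)
    (hGm : ∀ m : ℤ, ∀ v ∈ N, oGm m v ∈ N) :
    N = Kone ∨ N = ⊤ := by
  by_cases hNK : N ≤ Kone
  · left; exact le_antisymm hNK hK
  right
  obtain ⟨v, hvN, hvK⟩ := SetLike.not_le_iff_exists.mp hNK
  -- Step A: find a nonzero element of the second (barred) component sitting inside N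
  have key : ∃ b : ℤ →₀ ℂ, b ≠ 0 ∧ (((0 : ℤ →₀ ℂ), b) : VV) ∈ N := by
    by_cases hb : v.2 ≠ 0
    · refine ⟨v.2, hb, ?_⟩
      have h1 := hH 0 v hvN
      have h2 : oH 0 v = ((0 : ℤ →₀ ℂ), v.2) := by
        rw [oH, LinearMap.prodMap_apply, LinearMap.zero_apply, wop_one_zero,
          LinearMap.id_apply]
      rwa [h2] at h1
    · push_neg at hb
      -- v = (v.1, 0) with v.1 not a multiple of single 0 1
      have hex : ∃ n : ℤ, n ≠ 0 ∧ v.1 n ≠ 0 := by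
        by_contra hcon
        push_neg at hcon
        have hsupp : v.1.support ⊆ {0} := by
          intro j hj
          rw [Finsupp.mem_support_iff] at hj
          rcases eq_or_ne j 0 with h | h
          · simp [h]
          · exact absurd (hcon j h) (by exact fun h' => hj h')
        have hv1 : v.1 = Finsupp.single 0 (v.1 0) :=
          Finsupp.support_subset_singleton.mp hsupp
        apply hvK
        rw [Kone, Submodule.mem_span_singleton]
        refine ⟨v.1 0, ?_⟩
        rw [Prod.smul_mk, Finsupp.smul_single', mul_one, smul_zero, ← hv1, ← hb]
      obtain ⟨n, hn0, hvn⟩ := hex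
      refine ⟨wop (fun n => -2 * (n : ℂ)) 0 v.1, ?_, ?_⟩
      · intro hz
        have := wop_apply (fun n => -2 * (n : ℂ)) v.1 n
        rw [hz] at this
        simp only [Finsupp.coe_zero, Pi.zero_apply] at this
        have h2n : (-2 : ℂ) * (n : ℂ) ≠ 0 := by
          apply mul_ne_zero (by norm_num)
          exact_mod_cast hn0
        exact (mul_ne_zero h2n hvn) this.symm
      · have h1 := hGp 0 v hvN
        have h2 : oGp 0 v = ((0 : ℤ →₀ ℂ), wop (fun n => -2 * (n : ℂ)) 0 v.1) := by
          rw [oGp, LinearMap.prod_apply]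
          rfl
        rwa [h2] at h1
  obtain ⟨b, hb0, hbN⟩ := key
  -- Step B: the set of barred parts is closed under the diagonal operator
  set S : Submodule ℂ (ℤ →₀ ℂ) := N.comap (LinearMap.inr ℂ (ℤ →₀ ℂ) (ℤ →₀ ℂ)) with hS
  have hbS : b ∈ S := hbN
  have hD : ∀ b ∈ S, wop (fun k => (k : ℂ)) 0 b ∈ S := by
    intro c hc
    have h1 := hL 0 (((0 : ℤ →₀ ℂ), c) : VV) hc
    have h2 : oL 0 (((0 : ℤ →₀ ℂ), c) : VV)
        = ((0 : ℤ →₀ ℂ), wop (fun k => -((k : ℂ) + ((0 : ℤ) : ℂ) / 2)) 0 c) := by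
      rw [oL, LinearMap.prodMap_apply, map_zero]
    rw [h2] at h1
    have h3 : wop (fun k => (k : ℂ)) 0 c
        = -(wop (fun k => -((k : ℂ) + ((0 : ℤ) : ℂ) / 2)) 0 c) := by
      ext j
      rw [Finsupp.neg_apply, wop_apply, wop_apply]
      push_cast
      ring
    have h4 := N.neg_mem h1
    have h5 : (-(((0 : ℤ →₀ ℂ), wop (fun k => -((k : ℂ) + ((0 : ℤ) : ℂ) / 2)) 0 c)) : VV)
        = ((0 : ℤ →₀ ℂ), wop (fun k => (k : ℂ)) 0 c) := by
      rw [Prod.neg_mk, neg_zero, ← h3]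
    rwa [h5] at h4
  -- extract a single barred basis vector
  obtain ⟨k, hk⟩ : ∃ k, b k ≠ 0 := by
    by_contra hcon
    push_neg at hcon
    exact hb0 (Finsupp.ext hcon)
  have hsingle : Finsupp.single k (b k) ∈ S := extract S hD b hbS k
  have honeS : (((0 : ℤ →₀ ℂ), Finsupp.single k (1 : ℂ)) : VV) ∈ N := by
    have := S.smul_mem ((b k)⁻¹) hsingle
    rw [Finsupp.smul_single', inv_mul_cancel₀ hk] at this
    exact this
  -- Step C: all barred basis vectors are in N
  have hbarred : ∀ j : ℤ, (((0 : ℤ →₀ ℂ), Finsupp.single j (1 : ℂ)) : VV) ∈ N := by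
    intro j
    have h1 := hH (j - k) _ honeS
    have h2 : oH (j - k) (((0 : ℤ →₀ ℂ), Finsupp.single k (1 : ℂ)) : VV)
        = ((0 : ℤ →₀ ℂ), Finsupp.single j (1 : ℂ)) := by
      rw [oH, LinearMap.prodMap_apply, LinearMap.zero_apply, wop_single, mul_one,
        sub_add_cancel]
    rwa [h2] at h1
  -- Step D: all unbarred basis vectors are in N
  have hunbarred : ∀ n : ℤ, ((Finsupp.single n (1 : ℂ), (0 : ℤ →₀ ℂ)) : VV) ∈ N := by
    intro n
    have h1 := hGm (n - k) _ honeS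
    have h2 : oGm (n - k) (((0 : ℤ →₀ ℂ), Finsupp.single k (1 : ℂ)) : VV)
        = ((Finsupp.single n (1 : ℂ), (0 : ℤ →₀ ℂ)) : VV) := by
      rw [oGm, LinearMap.prod_apply]
      have : (wop (fun _ => (1 : ℂ)) (n - k)) (Finsupp.single k (1 : ℂ))
          = Finsupp.single n (1 : ℂ) := by
        rw [wop_single, mul_one, sub_add_cancel]
      simp only [Function.prod, LinearMap.coe_comp, Function.comp_apply, LinearMap.snd_apply,
        LinearMap.zero_apply, this]
    rwa [h2] at h1
  -- Step E: N = ⊤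
  rw [eq_top_iff]
  intro w _
  have h1 : ∀ a : ℤ →₀ ℂ, ((a, (0 : ℤ →₀ ℂ)) : VV) ∈ N := by
    intro a
    induction a using Finsupp.induction_linear with
    | zero => exact N.zero_mem
    | add f g hf hg =>
      have := N.add_mem hf hg
      rwa [Prod.mk_add_mk, add_zero] at this
    | single n x =>
      have := N.smul_mem x (hunbarred n)
      rwa [Prod.smul_mk, Finsupp.smul_single', mul_one, smul_zero] at this
  have h2 : ∀ a : ℤ →₀ ℂ, (((0 : ℤ →₀ ℂ), a) : VV) ∈ N := by
    intro a
    induction a using Finsupp.induction_linear with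
    | zero => exact N.zero_mem
    | add f g hf hg =>
      have := N.add_mem hf hg
      rwa [Prod.mk_add_mk, add_zero] at this
    | single n x =>
      have := N.smul_mem x (hbarred n)
      rwa [Prod.smul_mk, Finsupp.smul_single', mul_one, smul_zero] at this
  have hw : w = ((w.1, (0 : ℤ →₀ ℂ)) : VV) + (((0 : ℤ →₀ ℂ), w.2) : VV) := by
    rw [Prod.mk_add_mk, add_zero, zero_add]
  rw [hw]
  exact N.add_mem (h1 w.1) (h2 w.2)
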